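/- Let L ⊆ Z^n be a lattice with L ∩ N^n = {0} and let u ∈ L. Then the fiber F_u = {t ∈ N^n : u^+ - t ∈ L} is a finite set. -/

import Mathlib

/-- Componentwise positive part of an integer vector. -/
def vpos {n : ℕ} (u : Fin n → ℤ) : Fin n → ℤ := fun i => max (u i) 0

/-- For a positive lattice `L ⊆ ℤⁿ` and `u ∈ L`, the fiber
`F_u = {t ∈ ℕⁿ : u⁺ - t ∈ L}` is finite. -/
theorem fiber_finite {n : ℕ} (L : AddSubgroup (Fin n → ℤ))
    (hpos : ∀ x ∈ L, (∀ i, 0 ≤ x i) → x = 0)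
    (u : Fin n → ℤ) (hu : u ∈ L) :
    Set.Finite {t : Fin n → ℤ | (∀ i, 0 ≤ t i) ∧ vpos u - t ∈ L} := by
  by_contra hinf
  replace hinf : Set.Infinite _ := hinf
  have : Infinite {t : Fin n → ℤ | (∀ i, 0 ≤ t i) ∧ vpos u - t ∈ L} := hinf.to_subtype
  set f := Infinite.natEmbedding {t : Fin n → ℤ | (∀ i, 0 ≤ t i) ∧ vpos u - t ∈ L} with hfdef
  have hf : Function.Injective f := f.injective
  -- map to ℕ-valued vectors
  set g : ℕ → Fin n → ℕ := fun k i => ((f k : Fin n → ℤ) i).toNat with hg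
  have hPWO : (Set.univ : Set (Fin n → ℕ)).IsPWO := by
    haveI : ∀ i : Fin n, IsWellOrder ℕ (· < ·) := fun _ => inferInstance
    exact Set.isPWO_of_wellQuasiOrderedLE _
  obtain ⟨σ, hσ⟩ := hPWO.exists_monotone_subseq (f := g) (fun _ => Set.mem_univ _)
  have hle : g (σ 0) ≤ g (σ 1) := hσ (by norm_num)
  -- let a = f (σ 0), b = f (σ 1)
  obtain ⟨ha0, haL⟩ := (f (σ 0)).2
  obtain ⟨hb0, hbL⟩ := (f (σ 1)).2
  -- b - a ∈ L and nonneg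
  have hdiff : (f (σ 1) : Fin n → ℤ) - (f (σ 0) : Fin n → ℤ) ∈ L := by
    have := L.sub_mem haL hbL
    simpa using this
  have hnonneg : ∀ i, 0 ≤ ((f (σ 1) : Fin n → ℤ) - (f (σ 0) : Fin n → ℤ)) i := by
    intro i
    have h1 := hle i
    have h2 : ((f (σ 0) : Fin n → ℤ) i).toNat = (f (σ 0) : Fin n → ℤ) i := Int.toNat_of_nonneg (ha0 i)
    have h3 : ((f (σ 1) : Fin n → ℤ) i).toNat = (f (σ 1) : Fin n → ℤ) i := Int.toNat_of_nonneg (hb0 i)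
    simp only [Pi.sub_apply, sub_nonneg]
    rw [← h2, ← h3]
    exact_mod_cast h1
  have hzero := hpos _ hdiff hnonneg
  have : f (σ 0) = f (σ 1) := by
    ext1
    have : (f (σ 1) : Fin n → ℤ) = (f (σ 0) : Fin n → ℤ) := by
      have := sub_eq_zero.mp hzero
      exact this
    exact this.symm
  have : σ 0 = σ 1 := hf this
  exact absurd (σ.injective this) (by norm_num)
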